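/- Let (v_n)_{n≥0} satisfy 1 = v_0 ≤ v_1 ≤ v_2 ≤ ⋯ and, with the convention v_{-1} = 0, the condition v_{n-2} v_{2p-1} + v_{2p-3} v_{n-2p} = v_n v_{2p-3} + v_{2p-1} v_{n-2p} for all n ≥ 2 and p ≥ 1 with 2p ≤ n. Define weights w_1 = 1 and w_n = v_{n-1}(v_n − v_{n-2})/v_1 for n ≥ 2. Then the nested-sum coefficients built from these weights satisfy, for all n ≥ 1 and 1 ≤ m with 2m ≤ n: α_{2m-1,n-1} = (w_1 w_3 ⋯ w_{2m-1}) · (v_{n-1})! / ((v_{2m-1})! (v_{n-2m-1})!), where (v_k)! = v_0 v_1 ⋯ v_k and (v_{-1})! = (v_0)! = 1. -/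

import Mathlib

open Finset

/-- The nested-sum coefficients: `alphaC w m N` is `α_{2m-1, N}`, i.e.
`α_{2m-1,n-1} = ∑_{k₁=2m-1}^{n-1} w_{k₁} ∑_{k₂=2m-3}^{k₁-2} w_{k₂} ⋯ ∑_{k_m=1}^{k_{m-1}-2} w_{k_m}`
with `α_{-1,N} = 1` and empty sums equal to `0`. -/
noncomputable def alphaC (w : ℕ → ℝ) : ℕ → ℕ → ℝ
  | 0, _ => 1
  | m + 1, N => ∑ k ∈ Finset.Icc (2 * m + 1) N, w k * alphaC w m (k - 2)

/-- Extension of a sequence `v : ℕ → ℝ` to integer indices by `0`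
(the convention `v_{-1} = 0`). -/
noncomputable def vext (v : ℕ → ℝ) : ℤ → ℝ := fun n => if 0 ≤ n then v n.toNat else 0

theorem stmt_8 (v : ℕ → ℝ) (hv0 : v 0 = 1) (hmono : ∀ n : ℕ, v n ≤ v (n + 1))
    (hcompat : ∀ n p : ℤ, 2 ≤ n → 1 ≤ p → 2 * p ≤ n →
      vext v (n - 2) * vext v (2 * p - 1) + vext v (2 * p - 3) * vext v (n - 2 * p) =
        vext v n * vext v (2 * p - 3) + vext v (2 * p - 1) * vext v (n - 2 * p))
    (w : ℕ → ℝ) (hw1 : w 1 = 1)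
    (hwn : ∀ n : ℕ, 2 ≤ n → w n = v (n - 1) * (v n - v (n - 2)) / v 1) :
    ∀ n : ℕ, 1 ≤ n → ∀ m : ℕ, 1 ≤ m → 2 * m ≤ n →
      alphaC w m (n - 1) =
        (∏ j ∈ Finset.range m, w (2 * j + 1)) *
          (∏ i ∈ Finset.range n, v i) /
          ((∏ i ∈ Finset.range (2 * m), v i) *
            (∏ i ∈ Finset.range (n - 2 * m), v i)) := by
  have hv1 : ∀ n, (1:ℝ) ≤ v n := by
    intro n
    induction n with
    | zero => simp [hv0]
    | succ k ih => exact ih.trans (hmono k)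
  have hvpos : ∀ n, 0 < v n := fun n => lt_of_lt_of_le one_pos (hv1 n)
  have hvne : ∀ n, v n ≠ 0 := fun n => (hvpos n).ne'
  have hVne : ∀ n, (∏ i ∈ Finset.range n, v i) ≠ 0 :=
    fun n => (Finset.prod_pos (fun i _ => hvpos i)).ne'
  have hve : ∀ a : ℕ, vext v (a : ℤ) = v a := by
    intro a; simp [vext]
  -- formula for w at odd indices, uniform via vext
  have hwodd : ∀ m : ℕ, w (2*m+1) = v (2*m) * (v (2*m+1) - vext v (2*(m:ℤ)-1)) / v 1 := by
    intro m
    cases m with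
    | zero =>
      have : vext v (2*((0:ℕ):ℤ)-1) = 0 := by simp [vext]
      rw [this]
      simp [hw1, hv0, div_self (hvne 1)]
    | succ k =>
      have h1 : (2*(k+1)+1 : ℕ) - 1 = 2*(k+1) := by omega
      have h2 : (2*(k+1)+1 : ℕ) - 2 = 2*k+1 := by omega
      have h3 : vext v (2*(((k+1):ℕ):ℤ)-1) = v (2*k+1) := by
        have : (2*(((k+1):ℕ):ℤ)-1) = ((2*k+1 : ℕ) : ℤ) := by push_cast; ring
        rw [this, hve]
      rw [hwn (2*(k+1)+1) (by omega), h1, h2, h3]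
  -- key identity from hcompat
  have hkey : ∀ m d : ℕ,
      (v (2*m+1) - vext v (2*(m:ℤ)-1)) * (v (2*m+2+d) - v d)
        = v (2*m+1) * (v (2*m+2+d) - v (2*m+d)) := by
    intro m d
    have hc := hcompat ((2*m+2+d : ℕ) : ℤ) ((m:ℤ)+1)
      (by push_cast; omega) (by omega) (by push_cast; omega)
    have e1 : ((2*m+2+d : ℕ) : ℤ) - 2 = ((2*m+d : ℕ) : ℤ) := by push_cast; ring
    have e2 : (2*((m:ℤ)+1) - 1) = ((2*m+1 : ℕ) : ℤ) := by push_cast; ring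
    have e3 : (2*((m:ℤ)+1) - 3) = 2*(m:ℤ)-1 := by ring
    have e4 : ((2*m+2+d : ℕ) : ℤ) - 2*((m:ℤ)+1) = ((d : ℕ) : ℤ) := by push_cast; ring
    rw [e1, e2, e3, e4, hve, hve, hve, hve] at hc
    linear_combination hc
  -- the telescoping sum identity
  have hsum : ∀ m d : ℕ,
      ∑ k ∈ Finset.Icc (2*m+1) (2*m+1+d), w k *
        ((∏ j ∈ Finset.range m, w (2*j+1)) * (∏ i ∈ Finset.range (k-1), v i) /
          ((∏ i ∈ Finset.range (2*m), v i) * ∏ i ∈ Finset.range (k-1-2*m), v i))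
      = (∏ j ∈ Finset.range (m+1), w (2*j+1)) * (∏ i ∈ Finset.range (2*m+2+d), v i) /
          ((∏ i ∈ Finset.range (2*m+2), v i) * ∏ i ∈ Finset.range d, v i) := by
    intro m d
    induction d with
    | zero =>
      rw [Nat.add_zero, Finset.Icc_self, Finset.sum_singleton]
      have h1 : (2*m+1) - 1 = 2*m := by omega
      have h2 : (2*m+1) - 1 - 2*m = 0 := by omega
      rw [h2, h1, Finset.prod_range_succ (fun j => w (2*j+1)) m]
      have e22 : 2*m+2+0 = 2*m+2 := by ring
      rw [e22, Finset.prod_range_zero, mul_one, mul_one,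
        mul_div_assoc, div_self (hVne (2*m)), mul_one,
        mul_div_assoc, div_self (hVne (2*m+2)), mul_one]
      ring
    | succ d ih =>
      have hstep : 2*m+1 ≤ (2*m+1+d) + 1 := by omega
      have e : 2*m+1+(d+1) = (2*m+1+d)+1 := by ring
      rw [e, Finset.sum_Icc_succ_top hstep, ih]
      simp only [show 2*m+1+d+1 = 2*m+2+d from by omega,
        show 2*m+1+d-2*m = d+1 from by omega,
        show 2*m+2+(d+1) = (2*m+2+d)+1 from by omega,
        show 2*m+2+d-1 = 2*m+1+d from by omega]
      have ewn : w (2*m+2+d) = v (2*m+1+d) * (v (2*m+2+d) - v (2*m+d)) / v 1 := by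
        rw [hwn (2*m+2+d) (by omega), show 2*m+2+d-1 = 2*m+1+d from by omega,
          show 2*m+2+d-2 = 2*m+d from by omega]
      rw [ewn, Finset.prod_range_succ (fun j => w (2*j+1)) m, hwodd m]
      have p1 : (∏ i ∈ Finset.range ((2*m+2+d)+1), v i)
          = (∏ i ∈ Finset.range (2*m+2+d), v i) * v (2*m+2+d) :=
        Finset.prod_range_succ v _
      have p2 : (∏ i ∈ Finset.range (d+1), v i) = (∏ i ∈ Finset.range d, v i) * v d :=
        Finset.prod_range_succ v d
      have p3 : (∏ i ∈ Finset.range (2*m+2+d), v i)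
          = (∏ i ∈ Finset.range (2*m+1+d), v i) * v (2*m+1+d) := by
        have : 2*m+2+d = (2*m+1+d)+1 := by ring
        rw [this, Finset.prod_range_succ]
      have p4 : (∏ i ∈ Finset.range (2*m+2), v i)
          = (∏ i ∈ Finset.range (2*m), v i) * v (2*m) * v (2*m+1) := by
        have : 2*m+2 = (2*m)+1+1 := by ring
        rw [this, Finset.prod_range_succ, Finset.prod_range_succ]
      rw [p1, p2, p3, p4]
      have k := hkey m d
      set x := vext v (2*(m:ℤ)-1) with hx
      have n0 := hvne 1
      have n1 := hvne (2*m)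
      have n2 := hvne (2*m+1)
      have n3 := hvne d
      have n4 := hVne (2*m)
      have n5 := hVne d
      have n6 := hVne (2*m+1+d)
      field_simp
      linear_combination (-((∏ j ∈ Finset.range m, w (2*j+1)) * v (2*m+1+d))) * k
  -- main induction on m
  have hmain : ∀ m n : ℕ, 2*m ≤ n →
      alphaC w m (n - 1) =
        (∏ j ∈ Finset.range m, w (2 * j + 1)) *
          (∏ i ∈ Finset.range n, v i) /
          ((∏ i ∈ Finset.range (2 * m), v i) *
            (∏ i ∈ Finset.range (n - 2 * m), v i)) := by
    intro m
    induction m with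
    | zero =>
      intro n _
      show (1:ℝ) = _
      simp [div_self (hVne n)]
    | succ m ih =>
      intro n hn
      obtain ⟨d, rfl⟩ : ∃ d, n = 2*m+2+d := ⟨n - (2*m+2), by omega⟩
      have hN : 2*m+2+d - 1 = 2*m+1+d := by omega
      rw [show alphaC w (m+1) (2*m+2+d-1) = ∑ k ∈ Finset.Icc (2*m+1) (2*m+2+d-1),
            w k * alphaC w m (k-2) from rfl, hN]
      have : ∀ k ∈ Finset.Icc (2*m+1) (2*m+1+d), w k * alphaC w m (k-2)
          = w k * ((∏ j ∈ Finset.range m, w (2*j+1)) * (∏ i ∈ Finset.range (k-1), v i) /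
            ((∏ i ∈ Finset.range (2*m), v i) * ∏ i ∈ Finset.range (k-1-2*m), v i)) := by
        intro k hk
        rw [Finset.mem_Icc] at hk
        have h2 : k - 2 = (k-1) - 1 := by omega
        have h3 : 2*m ≤ k - 1 := by omega
        have h4 : (k-1) - 2*m = k-1-2*m := rfl
        rw [h2, ih (k-1) h3]
      rw [Finset.sum_congr rfl this, hsum m d]
      have : 2*m+2+d - 2*(m+1) = d := by omega
      rw [this]
      norm_num [Nat.mul_succ]
  intro n _ m _ h2m
  exact hmain m n h2m
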